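/- (Stability of curvature) Let 1 ≤ c ≤ d, let X = {x_1,...,x_d} and X' = {x'_1,...,x'_d} be disjoint alphabets, and let S ⊆ {1,...,c} with sub-alphabets X_S = {x_i : i ∈ S} and X'_S = {x'_i : i ∈ S}. Define h_k(X_S − X'_S) := Σ_{p+q=k}(-1)^q h_p(X_S) e_q(X'_S). Define φ(v_k) := v_k + (-1)^{c-k} Σ_{l=c+1}^{d} s(l−c−1, c−k)(x_1,...,x_c) · v_l for 1 ≤ k ≤ c, where s(p,q) is the hook Schur polynomial. Then in k[X,X',v_1,...,v_d]: Σ_{k=1}^{c} h_k(X_S − X'_S) · φ(v_k) = Σ_{k=1}^{d} h_k(X_S − X'_S) · v_k. -/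

import Mathlib

open Finset

variable {R : Type*} [CommRing R]

/-- The elementary symmetric polynomial `e k` of a finite family of ring elements. -/
def esym {ι : Type*} [Fintype ι] [DecidableEq ι] (x : ι → R) (k : ℕ) : R :=
  ∑ s ∈ Finset.univ.powersetCard k, ∏ i ∈ s, x i

/-- The complete homogeneous symmetric polynomial `h k` of a finite family of ring
elements (sum of all monomials of degree `k`). -/
def hsym {ι : Type*} [Fintype ι] [DecidableEq ι] (x : ι → R) (k : ℕ) : R :=
  ∑ μ : Sym ι k, (μ.1.map x).prod

/-- The hook Schur polynomial `s(i,j) = s_{(i+1,1^j)}` of a finite family. -/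
def hookS {ι : Type*} [Fintype ι] [DecidableEq ι] (x : ι → R) (i j : ℕ) : R :=
  ∑ p ∈ Finset.HasAntidiagonal.antidiagonal j, (-1 : R) ^ p.1 * hsym x (i + p.1 + 1) * esym x p.2

/-- The complete symmetric function `h j` of the difference alphabet `X - X'`. -/
def hdiff {ι κ : Type*} [Fintype ι] [DecidableEq ι] [Fintype κ] [DecidableEq κ]
    (x : ι → R) (x' : κ → R) (j : ℕ) : R :=
  ∑ p ∈ Finset.HasAntidiagonal.antidiagonal j, (-1 : R) ^ p.2 * hsym x p.1 * esym x' p.2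

/-- The elementary symmetric function `e j` of the difference alphabet `X - X'`. -/
def ediff {ι κ : Type*} [Fintype ι] [DecidableEq ι] [Fintype κ] [DecidableEq κ]
    (x : ι → R) (x' : κ → R) (j : ℕ) : R :=
  ∑ p ∈ Finset.HasAntidiagonal.antidiagonal j, (-1 : R) ^ p.2 * esym x p.1 * hsym x' p.2

/-- The power sum `p k` of a finite family of ring elements. -/
def psum' {ι : Type*} [Fintype ι] (x : ι → R) (k : ℕ) : R :=
  ∑ i, x i ^ k

/-- The elementary symmetric polynomial of a multiset of ring elements. -/
def esymM (s : Multiset R) (k : ℕ) : R :=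
  ((s.powersetCard k).map Multiset.prod).sum

section CurvatureAux

open PowerSeries

namespace CurvAux

noncomputable def geom (a : R) : PowerSeries R := PowerSeries.mk fun n => a ^ n

lemma one_sub_mul_geom (a : R) : (1 - PowerSeries.C a * PowerSeries.X) * geom a = 1 := by
  ext n
  cases n with
  | zero => simp [geom]
  | succ n =>
    rw [sub_mul, one_mul, map_sub, mul_assoc, PowerSeries.coeff_C_mul,
      PowerSeries.coeff_succ_X_mul]
    simp [geom, pow_succ, mul_comm, PowerSeries.coeff_one]

end CurvAux

namespace CurvAux2
open CurvAux

lemma coeff_prod_one_sub {ι : Type*} [DecidableEq ι] {s : Finset ι} (x : ι → R) (n : ℕ) :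
    PowerSeries.coeff n (∏ i ∈ s, (1 - PowerSeries.C (x i) * PowerSeries.X)) =
      (-1) ^ n * ∑ t ∈ s.powersetCard n, ∏ i ∈ t, x i := by
  induction s using Finset.induction generalizing n with
  | empty =>
    cases n with
    | zero => simp
    | succ n =>
      rw [Finset.prod_empty, PowerSeries.coeff_one]
      rw [Finset.powersetCard_eq_empty.2 (by simp)]
      simp
  | @insert a s ha ih =>
    rw [Finset.prod_insert ha, sub_mul, one_mul, map_sub, mul_assoc,
      PowerSeries.coeff_C_mul]
    cases n with
    | zero =>
      rw [PowerSeries.coeff_zero_X_mul, ih]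
      simp
    | succ n =>
      rw [PowerSeries.coeff_succ_X_mul, ih, ih, Finset.powersetCard_succ_insert ha,
        Finset.sum_union, Finset.sum_image]
      · have key : ∀ t ∈ s.powersetCard n, ∏ i ∈ insert a t, x i = x a * ∏ i ∈ t, x i := by
          intro t ht
          have hat : a ∉ t := fun hat =>
            ha ((Finset.mem_powersetCard.1 ht).1 hat)
          rw [Finset.prod_insert hat]
        rw [Finset.sum_congr rfl key, ← Finset.mul_sum]
        ring
      · intro t ht u hu htu
        have hat : a ∉ t := fun hmem => ha ((Finset.mem_powersetCard.1 ht).1 hmem)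
        have hau : a ∉ u := fun hmem => ha ((Finset.mem_powersetCard.1 hu).1 hmem)
        rw [← Finset.erase_insert hat, ← Finset.erase_insert hau, htu]
      · rw [Finset.disjoint_right]
        intro t ht ht'
        rw [Finset.mem_image] at ht
        obtain ⟨u, _, rfl⟩ := ht
        have : a ∈ insert a u := Finset.mem_insert_self a u
        exact ha ((Finset.mem_powersetCard.1 ht').1 this)


lemma coeff_prod_eq_zero {ι : Type*} [DecidableEq ι] {s : Finset ι} (f : ι → PowerSeries R)
    (hf : ∀ i ∈ s, ∀ n, 2 ≤ n → PowerSeries.coeff n (f i) = 0)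
    {N : ℕ} (hN : s.card < N) : PowerSeries.coeff N (∏ i ∈ s, f i) = 0 := by
  rw [PowerSeries.coeff_prod]
  refine Finset.sum_eq_zero fun l hl => ?_
  rw [Finset.mem_finsuppAntidiag] at hl
  have : ∃ i ∈ s, 1 < l i := by
    by_contra hcon
    push_neg at hcon
    have h1 : N ≤ ∑ _i ∈ s, 1 := hl.1 ▸ Finset.sum_le_sum hcon
    simp only [Finset.sum_const, smul_eq_mul, mul_one] at h1
    omega
  obtain ⟨i, his, hi⟩ := this
  exact Finset.prod_eq_zero his (hf i his _ hi)


variable {ι : Type*} [Fintype ι] [DecidableEq ι]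

noncomputable def Eg (x : ι → R) : PowerSeries R :=
  ∏ i : ι, (1 - PowerSeries.C (x i) * PowerSeries.X)

noncomputable def Hg (x : ι → R) : PowerSeries R :=
  ∏ i : ι, geom (x i)

lemma Eg_mul_Hg (x : ι → R) : Eg x * Hg x = 1 := by
  rw [Eg, Hg, ← Finset.prod_mul_distrib]
  simp [one_sub_mul_geom]

lemma prod_map_eq (x : ι → R) (m : Multiset ι) :
    (m.map x).prod = ∏ i : ι, x i ^ m.count i := by
  rw [Finset.prod_multiset_map_count]
  refine Finset.prod_subset (Finset.subset_univ _) ?_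
  intro i _ hi
  rw [Multiset.count_eq_zero_of_notMem (by simpa using hi), pow_zero]

lemma card_toMultiset_univ (l : ι →₀ ℕ) :
    Multiset.card l.toMultiset = ∑ i : ι, l i := by
  rw [Finsupp.card_toMultiset, Finsupp.sum_fintype _ _ fun i => rfl]
  rfl

lemma coeff_Hg (x : ι → R) (n : ℕ) : PowerSeries.coeff n (Hg x) = hsym x n := by
  rw [Hg, PowerSeries.coeff_prod, hsym]
  refine Finset.sum_bij' (fun l hl => (⟨l.toMultiset, ?_⟩ : Sym ι n))
      (fun μ _ => μ.1.toFinsupp) (fun _ _ => Finset.mem_univ _) ?_ ?_ ?_ ?_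
  · rw [Finset.mem_finsuppAntidiag] at hl
    rw [card_toMultiset_univ, hl.1]
  · intro μ _
    rw [Finset.mem_finsuppAntidiag]
    refine ⟨?_, Finset.subset_univ _⟩
    rw [← card_toMultiset_univ, Multiset.toFinsupp_toMultiset, μ.2]
  · intro l _
    exact Finsupp.toMultiset_toFinsupp l
  · intro μ _
    exact Subtype.ext (Multiset.toFinsupp_toMultiset _)
  · intro l _
    rw [prod_map_eq]
    refine Finset.prod_congr rfl fun i _ => ?_
    rw [geom, PowerSeries.coeff_mk, Finsupp.count_toMultiset]

lemma coeff_Eg (x : ι → R) (n : ℕ) :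
    PowerSeries.coeff n (Eg x) = (-1) ^ n * esym x n := by
  rw [Eg, coeff_prod_one_sub, esym]

lemma coeff_Eg_eq_zero (x : ι → R) {n : ℕ} (hn : Fintype.card ι < n) :
    PowerSeries.coeff n (Eg x) = 0 := by
  rw [Eg]
  refine coeff_prod_eq_zero _ (fun i _ n hn2 => ?_) (by simpa using hn)
  rw [map_sub, PowerSeries.coeff_one, PowerSeries.coeff_C_mul, PowerSeries.coeff_X]
  rcases n with _ | _ | n <;> simp_all

lemma esym_eq_zero (x : ι → R) {n : ℕ} (hn : Fintype.card ι < n) : esym x n = 0 := by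
  rw [esym, Finset.powersetCard_eq_empty.2 (by simpa using hn), Finset.sum_empty]

lemma esym_zero (x : ι → R) : esym x 0 = 1 := by
  rw [esym, Finset.powersetCard_zero]
  simp

lemma hsym_zero (x : ι → R) : hsym x 0 = 1 := by
  rw [hsym]
  have : ∀ μ : Sym ι 0, ((μ.1.map x).prod : R) = 1 := by
    intro μ
    have h0 : μ.1 = 0 := Multiset.card_eq_zero.1 μ.2
    rw [h0]
    simp
  rw [Finset.sum_congr rfl fun μ _ => this μ]
  simp

lemma neg_one_pow_sub {a m : ℕ} (h : m ≤ a) :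
    (-1 : R) ^ (a - m) = (-1) ^ a * (-1) ^ m := by
  have h2 : (-1 : R) ^ m * (-1) ^ m = 1 := by rw [← mul_pow]; simp
  calc (-1 : R) ^ (a - m) = (-1) ^ (a - m) * ((-1) ^ m * (-1) ^ m) := by rw [h2, mul_one]
    _ = (-1) ^ (a - m + m) * (-1) ^ m := by rw [pow_add]; ring
    _ = (-1) ^ a * (-1) ^ m := by rw [Nat.sub_add_cancel h]

lemma core {c l : ℕ} (hc : 1 ≤ c) (hl : c < l) (e h f g : ℕ → R)
    (A1 : f l = ∑ p ∈ Finset.HasAntidiagonal.antidiagonal l, h p.1 * g p.2)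
    (A2 : ∀ m, g m = ∑ p ∈ Finset.HasAntidiagonal.antidiagonal m, (-1 : R) ^ p.1 * e p.1 * f p.2)
    (A3 : ∀ m, c < m → g m = 0)
    (A4 : ∀ n, 1 ≤ n → (∑ p ∈ Finset.HasAntidiagonal.antidiagonal n, (-1 : R) ^ p.1 * e p.1 * h p.2) = 0)
    (A5 : ∀ i, c < i → e i = 0)
    (A6 : f 0 = 1) :
    ∑ k ∈ Finset.Icc 1 c, (-1 : R) ^ (c - k) *
        (∑ p ∈ Finset.HasAntidiagonal.antidiagonal (c - k),
          (-1 : R) ^ p.1 * h (l - c - 1 + p.1 + 1) * e p.2) * f k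
      = f l := by
  set A : ℕ → ℕ → R := fun i k => (-1 : R) ^ i * e i * (h (l - i - k) * f k) with hA
  have step1 : f l = ∑ m ∈ Finset.range (c + 1), h (l - m) * g m := by
    have ext : ∑ m ∈ Finset.range (l + 1), h (l - m) * g m
        = ∑ m ∈ Finset.range (c + 1), h (l - m) * g m :=
      (Finset.sum_subset (Finset.range_subset_range.2 (by omega)) (fun m hm hm' => by
        rw [Finset.mem_range] at hm hm'
        rw [A3 m (by omega), mul_zero])).symm
    rw [A1, Finset.Nat.sum_antidiagonal_eq_sum_range_succ_mk, ← ext,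
      ← Finset.sum_range_reflect (fun m => h (l - m) * g m) (l + 1)]
    refine Finset.sum_congr rfl fun k hk => ?_
    rw [Finset.mem_range] at hk
    have h1 : l + 1 - 1 - k = l - k := by omega
    have h2 : l - (l - k) = k := by omega
    rw [h1, h2]
  have step2 : f l = ∑ m ∈ Finset.range (c + 1), ∑ i ∈ Finset.range (m + 1), A i (m - i) := by
    rw [step1]
    refine Finset.sum_congr rfl fun m hm => ?_
    rw [A2 m, Finset.mul_sum, Finset.Nat.sum_antidiagonal_eq_sum_range_succ_mk]
    refine Finset.sum_congr rfl fun i hi => ?_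
    rw [Finset.mem_range] at hm hi
    simp only [hA]
    have h1 : l - i - (m - i) = l - m := by omega
    rw [h1]; ring
  have step3 : f l = ∑ k ∈ Finset.range (c + 1), ∑ i ∈ Finset.range (c + 1 - k), A i k := by
    rw [step2]
    have refl : ∀ m, ∑ i ∈ Finset.range (m + 1), A i (m - i)
        = ∑ k ∈ Finset.range (m + 1), (fun a b => A b a) k (m - k) := by
      intro m
      rw [← Finset.sum_range_reflect (fun i => A i (m - i)) (m + 1)]
      refine Finset.sum_congr rfl fun k hk => ?_
      rw [Finset.mem_range] at hk
      have h1 : m + 1 - 1 - k = m - k := by omega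
      have h2 : m - (m - k) = k := by omega
      simp only [h1, h2]
    rw [Finset.sum_congr rfl fun m _ => refl m,
      Finset.sum_range_diag_flip (c + 1) (fun a b => A b a)]
  have tail : ∑ i ∈ Finset.range (c + 1), A i 0 = 0 := by
    have hAi0 : ∀ i, A i 0 = (-1 : R) ^ i * e i * h (l - i) := by
      intro i
      simp only [hA, Nat.sub_zero, A6, mul_one]
    have ext : ∑ i ∈ Finset.range (l + 1), (-1 : R) ^ i * e i * h (l - i)
        = ∑ i ∈ Finset.range (c + 1), (-1 : R) ^ i * e i * h (l - i) :=
      (Finset.sum_subset (Finset.range_subset_range.2 (by omega)) (fun i hi hi' => by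
        rw [Finset.mem_range] at hi hi'
        rw [A5 i (by omega)]; ring)).symm
    calc ∑ i ∈ Finset.range (c + 1), A i 0
        = ∑ i ∈ Finset.range (c + 1), (-1 : R) ^ i * e i * h (l - i) :=
          Finset.sum_congr rfl fun i _ => hAi0 i
      _ = ∑ i ∈ Finset.range (l + 1), (-1 : R) ^ i * e i * h (l - i) := ext.symm
      _ = 0 := by
          have h4 := A4 l (by omega)
          rw [Finset.Nat.sum_antidiagonal_eq_sum_range_succ_mk] at h4
          simpa using h4
  have step4 : f l = ∑ k ∈ Finset.range c, ∑ i ∈ Finset.range (c - k), A i (k + 1) := by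
    rw [step3, Finset.sum_range_succ', Nat.sub_zero, tail, add_zero]
    refine Finset.sum_congr rfl fun k hk => ?_
    rw [Finset.mem_range] at hk
    have h1 : c + 1 - (k + 1) = c - k := by omega
    rw [h1]
  -- now the main matching
  rw [← Finset.Ico_add_one_right_eq_Icc, Finset.sum_Ico_eq_sum_range, Nat.add_sub_cancel, step4]
  refine Finset.sum_congr rfl fun j hj => ?_
  rw [Finset.mem_range] at hj
  rw [Finset.Nat.sum_antidiagonal_eq_sum_range_succ_mk]
  have hr : (c - (1 + j)).succ = c - j := by omega
  rw [hr, Finset.mul_sum, Finset.sum_mul,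
    ← Finset.sum_range_reflect (fun i => A i (j + 1)) (c - j)]
  refine Finset.sum_congr rfl fun m hm => ?_
  rw [Finset.mem_range] at hm
  simp only [hA]
  have h1 : c - j - 1 - m = c - (1 + j) - m := by omega
  have h2 : l - (c - (1 + j) - m) - (j + 1) = l - c - 1 + m + 1 := by omega
  have h3 : (1 : ℕ) + j = j + 1 := by omega
  rw [h1, h2, h3, neg_one_pow_sub (by omega : m ≤ c - (j + 1))]
  ring

set_option maxHeartbeats 1000000 in
lemma star (c l : ℕ) (hc : 1 ≤ c) (hcl : c < l) (x x' : ℕ → R) (S : Finset ℕ)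
    (hS : S ⊆ Finset.Icc 1 c) :
    ∑ k ∈ Finset.Icc 1 c, (-1 : R) ^ (c - k) *
        hookS (fun j : Fin c => x ((j : ℕ) + 1)) (l - c - 1) (c - k) *
        hdiff (fun j : S => x j) (fun j : S => x' j) k
      = hdiff (fun j : S => x j) (fun j : S => x' j) l := by
  classical
  set xS : ↥S → R := fun j => x ↑j with hxS
  set x'S : ↥S → R := fun j => x' ↑j with hx'S
  set Xc : Fin c → R := fun j => x ((j : ℕ) + 1) with hXc
  set F : PowerSeries R := Hg xS * Eg x'S with hF
  set P : PowerSeries R := Eg Xc * F with hP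
  have hdiff_coeff : ∀ k, hdiff xS x'S k = PowerSeries.coeff k F := by
    intro k
    rw [hF, PowerSeries.coeff_mul, hdiff]
    refine Finset.sum_congr rfl fun p _ => ?_
    rw [coeff_Hg, coeff_Eg]
    ring
  -- the auxiliary polynomial Q
  set Q : PowerSeries R :=
    ∏ i ∈ Finset.Icc 1 c \ S, (1 - PowerSeries.C (x i) * PowerSeries.X) with hQ
  have hEc : Eg Xc = Q * Eg xS := by
    rw [Eg, hXc]
    have e1 : ∏ j : Fin c, (1 - PowerSeries.C (x ((j : ℕ) + 1)) * PowerSeries.X)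
        = ∏ j ∈ Finset.range c, (1 - PowerSeries.C (x (j + 1)) * PowerSeries.X) :=
      Fin.prod_univ_eq_prod_range (fun j => 1 - PowerSeries.C (x (j + 1)) * PowerSeries.X) c
    have e2 : ∏ i ∈ Finset.Icc 1 c, (1 - PowerSeries.C (x i) * PowerSeries.X)
        = ∏ j ∈ Finset.range c, (1 - PowerSeries.C (x (j + 1)) * PowerSeries.X) := by
      rw [← Finset.Ico_add_one_right_eq_Icc, Finset.prod_Ico_eq_prod_range]
      refine Finset.prod_congr (by norm_num) fun j _ => by rw [Nat.add_comm 1 j]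
    have e3 : Eg xS = ∏ i ∈ S, (1 - PowerSeries.C (x i) * PowerSeries.X) := by
      rw [Eg, hxS]
      exact Finset.prod_coe_sort S (fun i => 1 - PowerSeries.C (x i) * PowerSeries.X)
    rw [e1, ← e2, ← Finset.prod_sdiff hS, e3, hQ]
  have hPQ : P = Q * Eg x'S := by
    have h1 : Eg xS * Hg xS = 1 := Eg_mul_Hg xS
    calc P = Eg Xc * (Hg xS * Eg x'S) := by rw [hP, hF]
      _ = (Eg xS * Hg xS) * (Q * Eg x'S) := by rw [hEc]; ring
      _ = Q * Eg x'S := by rw [h1, one_mul]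
  have hScard : S.card ≤ c := by
    have := Finset.card_le_card hS
    simpa [Nat.card_Icc] using this
  have hQcard : (Finset.Icc 1 c \ S).card = c - S.card := by
    rw [Finset.card_sdiff_of_subset hS, Nat.card_Icc]
    omega
  -- core hypotheses
  have A3 : ∀ m, c < m → PowerSeries.coeff m P = 0 := by
    intro m hm
    rw [hPQ, PowerSeries.coeff_mul]
    refine Finset.sum_eq_zero fun p hp => ?_
    rw [Finset.HasAntidiagonal.mem_antidiagonal] at hp
    by_cases h1 : (Finset.Icc 1 c \ S).card < p.1
    · have hcq : PowerSeries.coeff p.1 Q = 0 := by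
        rw [hQ]
        refine coeff_prod_eq_zero _ (fun i _ n hn => ?_) h1
        rw [map_sub, PowerSeries.coeff_one, PowerSeries.coeff_C_mul, PowerSeries.coeff_X]
        rcases n with _ | _ | n <;> simp_all
      rw [hcq, zero_mul]
    · have h2 : Fintype.card (S : Finset ℕ) < p.2 := by
        rw [Fintype.card_coe]
        omega
      rw [coeff_Eg_eq_zero x'S h2, mul_zero]
  have hHgP : Hg Xc * P = F := by
    calc Hg Xc * P = (Eg Xc * Hg Xc) * F := by rw [hP]; ring
      _ = F := by rw [Eg_mul_Hg, one_mul]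
  have A1 : PowerSeries.coeff l F
      = ∑ p ∈ Finset.HasAntidiagonal.antidiagonal l, hsym Xc p.1 * PowerSeries.coeff p.2 P := by
    rw [← hHgP, PowerSeries.coeff_mul]
    exact Finset.sum_congr rfl fun p _ => by rw [coeff_Hg]
  have A2 : ∀ m, PowerSeries.coeff m P
      = ∑ p ∈ Finset.HasAntidiagonal.antidiagonal m,
          (-1 : R) ^ p.1 * esym Xc p.1 * PowerSeries.coeff p.2 F := by
    intro m
    rw [hP, PowerSeries.coeff_mul]
    exact Finset.sum_congr rfl fun p _ => by rw [coeff_Eg]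
  have A4 : ∀ n, 1 ≤ n →
      (∑ p ∈ Finset.HasAntidiagonal.antidiagonal n, (-1 : R) ^ p.1 * esym Xc p.1 * hsym Xc p.2) = 0 := by
    intro n hn
    calc ∑ p ∈ Finset.HasAntidiagonal.antidiagonal n, (-1 : R) ^ p.1 * esym Xc p.1 * hsym Xc p.2
        = ∑ p ∈ Finset.HasAntidiagonal.antidiagonal n,
            PowerSeries.coeff p.1 (Eg Xc) * PowerSeries.coeff p.2 (Hg Xc) :=
          Finset.sum_congr rfl fun p _ => by rw [coeff_Eg, coeff_Hg]
      _ = PowerSeries.coeff n (Eg Xc * Hg Xc) := (PowerSeries.coeff_mul _ _ _).symm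
      _ = 0 := by
          rw [Eg_mul_Hg, PowerSeries.coeff_one, if_neg (by omega)]
  have A5 : ∀ i, c < i → esym Xc i = 0 := fun i hi =>
    esym_eq_zero Xc (by simpa using hi)
  have A6 : PowerSeries.coeff 0 F = 1 := by
    rw [← hdiff_coeff, hdiff, Finset.Nat.antidiagonal_zero, Finset.sum_singleton,
      hsym_zero, esym_zero]
    ring
  have main := core hc hcl (esym Xc) (hsym Xc) (fun k => PowerSeries.coeff k F)
    (fun k => PowerSeries.coeff k P) A1 A2 A3 A4 A5 A6
  simp only [hookS]
  rw [Finset.sum_congr rfl fun k _ => by rw [hdiff_coeff k], hdiff_coeff l]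
  exact main

end CurvAux2

end CurvatureAux

open CurvAux CurvAux2 in
theorem curvature_stability (c d : ℕ) (hc : 1 ≤ c) (hcd : c ≤ d) (x x' v : ℕ → R)
    (S : Finset ℕ) (hS : S ⊆ Finset.Icc 1 c) :
    ∑ k ∈ Finset.Icc 1 c, hdiff (fun j : S => x j) (fun j : S => x' j) k *
        (v k + (-1 : R) ^ (c - k) * ∑ l ∈ Finset.Icc (c + 1) d,
          hookS (fun j : Fin c => x ((j : ℕ) + 1)) (l - c - 1) (c - k) * v l) =
      ∑ k ∈ Finset.Icc 1 d, hdiff (fun j : S => x j) (fun j : S => x' j) k * v k := by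
  have expand : ∀ k ∈ Finset.Icc 1 c,
      hdiff (fun j : S => x j) (fun j : S => x' j) k *
        (v k + (-1 : R) ^ (c - k) * ∑ l ∈ Finset.Icc (c + 1) d,
          hookS (fun j : Fin c => x ((j : ℕ) + 1)) (l - c - 1) (c - k) * v l)
      = hdiff (fun j : S => x j) (fun j : S => x' j) k * v k +
        ∑ l ∈ Finset.Icc (c + 1) d,
          (-1 : R) ^ (c - k) * hookS (fun j : Fin c => x ((j : ℕ) + 1)) (l - c - 1) (c - k) *
            hdiff (fun j : S => x j) (fun j : S => x' j) k * v l := by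
    intro k _
    rw [mul_add, Finset.mul_sum, Finset.mul_sum]
    congr 1
    exact Finset.sum_congr rfl fun l _ => by ring
  rw [Finset.sum_congr rfl expand, Finset.sum_add_distrib, Finset.sum_comm]
  have second : ∑ l ∈ Finset.Icc (c + 1) d, ∑ k ∈ Finset.Icc 1 c,
        (-1 : R) ^ (c - k) * hookS (fun j : Fin c => x ((j : ℕ) + 1)) (l - c - 1) (c - k) *
          hdiff (fun j : S => x j) (fun j : S => x' j) k * v l
      = ∑ l ∈ Finset.Icc (c + 1) d,
          hdiff (fun j : S => x j) (fun j : S => x' j) l * v l := by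
    refine Finset.sum_congr rfl fun l hl => ?_
    rw [← Finset.sum_mul]
    congr 1
    exact star c l hc (by rw [Finset.mem_Icc] at hl; omega) x x' S hS
  rw [second]
  have e1 : Finset.Icc 1 c = Finset.Ioc 0 c := rfl
  have e2 : Finset.Icc (c + 1) d = Finset.Ioc c d := Finset.Icc_add_one_left_eq_Ioc c d
  have e3 : Finset.Icc 1 d = Finset.Ioc 0 d := rfl
  rw [e1, e2, e3]
  exact Finset.sum_Ioc_consecutive
    (fun k => hdiff (fun j : S => x j) (fun j : S => x' j) k * v k) (Nat.zero_le c) hcd
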